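/- Let μ be a probability measure on X and λ₁, λ₂ : X → ℝ bounded measurable with λᵢ ≥ κ > 0, λ₁ = g∘w, λ₂ = g∘v for a Lipschitz g : ℝ → [κ, ∞) with Lipschitz constant ḡ. Then ∫ λ₁(x) (log(λ₁(x)/λ₂(x)))² dμ(x) ≤ (ḡ²/κ) ‖w−v‖_∞² · (1 + (ḡ/κ) ‖w−v‖_∞). -/

import Mathlib

open MeasureTheory Real

lemma aux_pt (κ a b : ℝ) (hκ : 0 < κ) (ha : κ ≤ a) (hb : κ ≤ b) :
    a * (Real.log (a / b)) ^ 2 ≤ |a - b| ^ 2 / κ + |a - b| ^ 3 / κ ^ 2 := by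
  have ha0 : 0 < a := hκ.trans_le ha
  have hb0 : 0 < b := hκ.trans_le hb
  have h1 : Real.log (a / b) ≤ (a - b) / b := by
    have := Real.log_le_sub_one_of_pos (div_pos ha0 hb0)
    calc Real.log (a / b) ≤ a / b - 1 := this
      _ = (a - b) / b := by field_simp
  have h2 : Real.log (b / a) ≤ (b - a) / a := by
    have := Real.log_le_sub_one_of_pos (div_pos hb0 ha0)
    calc Real.log (b / a) ≤ b / a - 1 := this
      _ = (b - a) / a := by field_simp
  have hL : Real.log (a / b) = -(Real.log (b / a)) := by
    rw [Real.log_div ha0.ne' hb0.ne', Real.log_div hb0.ne' ha0.ne']; ring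
  rcases le_total a b with h | h
  · have hd : |a - b| = b - a := by rw [abs_sub_comm]; exact abs_of_nonneg (by linarith)
    rw [hd]
    set d := b - a with hdef
    have hd0 : 0 ≤ d := by linarith
    have hL1 : -(Real.log (a / b)) ≤ d / a := by rw [hL, neg_neg]; exact h2
    have hL2 : Real.log (a / b) ≤ 0 := by
      refine h1.trans ?_
      apply div_nonpos_of_nonpos_of_nonneg <;> linarith
    have hsq : (Real.log (a / b)) ^ 2 ≤ (d / a) ^ 2 := by
      have : |Real.log (a / b)| ≤ d / a := by
        rw [abs_of_nonpos hL2]; exact hL1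
      calc (Real.log (a / b)) ^ 2 = |Real.log (a / b)| ^ 2 := (sq_abs _).symm
        _ ≤ (d / a) ^ 2 := by apply pow_le_pow_left₀ (abs_nonneg _) this
    have key : a * (d / a) ^ 2 = d ^ 2 / a := by field_simp
    have : a * (Real.log (a / b)) ^ 2 ≤ d ^ 2 / a := by
      calc a * (Real.log (a / b)) ^ 2 ≤ a * (d / a) ^ 2 := by nlinarith
        _ = d ^ 2 / a := key
    refine this.trans ?_
    have h3 : d ^ 2 / a ≤ d ^ 2 / κ := by
      apply div_le_div_of_nonneg_left (by positivity) hκ ha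
    have h4 : 0 ≤ d ^ 3 / κ ^ 2 := by positivity
    linarith
  · have hd : |a - b| = a - b := abs_of_nonneg (by linarith)
    rw [hd]
    set d := a - b with hdef
    have hd0 : 0 ≤ d := by linarith
    have hL1 : Real.log (a / b) ≤ d / b := h1
    have hL2 : 0 ≤ Real.log (a / b) := by
      rw [hL, neg_nonneg]
      refine h2.trans ?_
      apply div_nonpos_of_nonpos_of_nonneg <;> linarith
    have : a * (Real.log (a / b)) ^ 2 ≤ a * (d / b) ^ 2 := by
      have hsq : (Real.log (a / b)) ^ 2 ≤ (d / b) ^ 2 := pow_le_pow_left₀ hL2 hL1 2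
      nlinarith
    refine this.trans ?_
    have ha' : a = b + d := by rw [hdef]; ring
    have key : a * (d / b) ^ 2 = d ^ 2 / b + d ^ 3 / b ^ 2 := by
      rw [ha']; field_simp
    rw [key]
    have h3 : d ^ 2 / b ≤ d ^ 2 / κ := div_le_div_of_nonneg_left (by positivity) hκ hb
    have h4 : d ^ 3 / b ^ 2 ≤ d ^ 3 / κ ^ 2 := by
      apply div_le_div_of_nonneg_left (by positivity) (by positivity)
      apply pow_le_pow_left₀ hκ.le hb
    linarith

theorem v_le_sup_norm {X : Type*} [MeasurableSpace X] (μ : Measure X)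
    [IsProbabilityMeasure μ] (κ gbar : ℝ) (hκ : 0 < κ)
    (g : ℝ → ℝ) (hg : ∀ a b : ℝ, |g a - g b| ≤ gbar * |a - b|)
    (hgκ : ∀ t : ℝ, κ ≤ g t)
    (w v : X → ℝ)
    (hmw : Measurable fun x => g (w x)) (hmv : Measurable fun x => g (v x))
    (Cw : ℝ) (hw : ∀ x, |w x| ≤ Cw) (Cv : ℝ) (hv : ∀ x, |v x| ≤ Cv)
    (hint : Integrable (fun x => g (w x) * (Real.log (g (w x) / g (v x))) ^ 2) μ) :
    ∫ x, g (w x) * (Real.log (g (w x) / g (v x))) ^ 2 ∂μ ≤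
      (gbar ^ 2 / κ) * (⨆ x, |w x - v x|) ^ 2 *
        (1 + (gbar / κ) * ⨆ x, |w x - v x|) := by
  have hne : Nonempty X := by
    by_contra h
    rw [not_nonempty_iff] at h
    have h1 : μ Set.univ = 1 := measure_univ
    rw [Set.univ_eq_empty_iff.mpr h, measure_empty] at h1
    exact zero_ne_one h1
  have hgbar : 0 ≤ gbar := by
    have := hg 0 1
    have h0 : (0:ℝ) ≤ gbar * |(0:ℝ) - 1| := le_trans (abs_nonneg _) this
    simpa using h0
  set M := ⨆ x, |w x - v x| with hM
  have hbdd : BddAbove (Set.range fun x => |w x - v x|) := by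
    refine ⟨Cw + Cv, ?_⟩
    rintro _ ⟨x, rfl⟩
    calc |w x - v x| ≤ |w x| + |v x| := abs_sub _ _
      _ ≤ Cw + Cv := add_le_add (hw x) (hv x)
  have hMx : ∀ x, |w x - v x| ≤ M := fun x => le_ciSup hbdd x
  have hM0 : 0 ≤ M := le_trans (abs_nonneg _) (hMx (Classical.arbitrary X))
  set C := (gbar * M) ^ 2 / κ + (gbar * M) ^ 3 / κ ^ 2 with hC
  have hpt : ∀ x, g (w x) * (Real.log (g (w x) / g (v x))) ^ 2 ≤ C := by
    intro x
    have hd : |g (w x) - g (v x)| ≤ gbar * M := by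
      refine (hg (w x) (v x)).trans ?_
      exact mul_le_mul_of_nonneg_left (hMx x) hgbar
    have h0 : 0 ≤ |g (w x) - g (v x)| := abs_nonneg _
    refine (aux_pt κ (g (w x)) (g (v x)) hκ (hgκ _) (hgκ _)).trans ?_
    have h2 : |g (w x) - g (v x)| ^ 2 ≤ (gbar * M) ^ 2 := pow_le_pow_left₀ h0 hd 2
    have h3 : |g (w x) - g (v x)| ^ 3 ≤ (gbar * M) ^ 3 := pow_le_pow_left₀ h0 hd 3
    have hκ2 : (0:ℝ) < κ ^ 2 := by positivity
    rw [hC]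
    gcongr
  have hint2 : ∫ x, g (w x) * (Real.log (g (w x) / g (v x))) ^ 2 ∂μ ≤ C := by
    calc ∫ x, g (w x) * (Real.log (g (w x) / g (v x))) ^ 2 ∂μ
        ≤ ∫ _x, C ∂μ := integral_mono hint (integrable_const C) hpt
      _ = C := by simp
  refine hint2.trans_eq ?_
  rw [hC]
  field_simp
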